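/- Let f: M → ℝ be a smooth function on a smooth manifold and let N ⊂ M be an embedded submanifold of codimension 1. If p ∈ N is a nondegenerate critical point of both f and f|_N, then the Morse index of f at p equals either the Morse index of f|_N at p or that index plus 1. -/

import Mathlib

open Real Manifold
open Filter Topology Module

section Aux

variable {E F : Type*} [NormedAddCommGroup E] [NormedSpace ℝ E]
    [NormedAddCommGroup F] [NormedSpace ℝ F]

lemma hessian_comp {g : F → ℝ} {h : E → F} {x₀ : E}
    (hg : ContDiffAt ℝ 2 g (h x₀)) (hh : ContDiffAt ℝ 2 h x₀)
    (hg' : fderiv ℝ g (h x₀) = 0) (v w : E) :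
    iteratedFDeriv ℝ 2 (g ∘ h) x₀ ![v, w]
      = iteratedFDeriv ℝ 2 g (h x₀) ![fderiv ℝ h x₀ v, fderiv ℝ h x₀ w] := by
  rw [iteratedFDeriv_two_apply, iteratedFDeriv_two_apply]
  have hhc : ContinuousAt h x₀ := hh.continuousAt
  have hgev : ∀ᶠ x in 𝓝 x₀, ContDiffAt ℝ 2 g (h x) := hhc.eventually (hg.eventually (by norm_num))
  have hhev : ∀ᶠ x in 𝓝 x₀, ContDiffAt ℝ 2 h x := hh.eventually (by norm_num)
  have key : fderiv ℝ (g ∘ h) =ᶠ[𝓝 x₀]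
      fun x => ((fderiv ℝ g (h x)).comp (fderiv ℝ h x)) := by
    filter_upwards [hgev, hhev] with x hgx hhx
    exact fderiv_comp x (hgx.differentiableAt two_ne_zero) (hhx.differentiableAt two_ne_zero)
  have hdg : DifferentiableAt ℝ (fderiv ℝ g) (h x₀) :=
    (hg.fderiv_right (m := 1) le_rfl).differentiableAt one_ne_zero
  have hdh : DifferentiableAt ℝ (fderiv ℝ h) x₀ :=
    (hh.fderiv_right (m := 1) le_rfl).differentiableAt one_ne_zero
  have hdgh : DifferentiableAt ℝ (fun x => fderiv ℝ g (h x)) x₀ :=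
    hdg.comp x₀ (hh.differentiableAt two_ne_zero)
  rw [key.fderiv_eq, fderiv_clm_comp hdgh hdh]
  have : fderiv ℝ (fun x => fderiv ℝ g (h x)) x₀
      = (fderiv ℝ (fderiv ℝ g) (h x₀)).comp (fderiv ℝ h x₀) :=
    fderiv_comp x₀ hdg (hh.differentiableAt two_ne_zero)
  simp [this, hg']

end Aux

section LinAlg

variable {V W : Type*} [AddCommGroup V] [Module ℝ V] [AddCommGroup W] [Module ℝ W]
  [FiniteDimensional ℝ V] [FiniteDimensional ℝ W]

def negSet (B : V → V → ℝ) : Set ℕ :=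
  {k | ∃ U : Submodule ℝ V, finrank ℝ U = k ∧ ∀ v ∈ U, v ≠ 0 → B v v < 0}

omit [FiniteDimensional ℝ V] in
lemma negSet_zero (B : V → V → ℝ) : 0 ∈ negSet B :=
  ⟨⊥, finrank_bot ℝ V, fun _ hv hv0 => absurd ((Submodule.mem_bot ℝ).mp hv) hv0⟩

lemma negSet_bdd (B : V → V → ℝ) : BddAbove (negSet B) := by
  refine ⟨finrank ℝ V, fun k hk => ?_⟩
  obtain ⟨U, hU, -⟩ := hk
  exact hU ▸ U.finrank_le

lemma sSup_negSet_mem (B : V → V → ℝ) : sSup (negSet B) ∈ negSet B :=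
  Nat.sSup_mem ⟨0, negSet_zero B⟩ (negSet_bdd B)

lemma index_comp_le (B : V → V → ℝ) (B' : W → W → ℝ) (L : W →ₗ[ℝ] V)
    (hB0 : B 0 0 = 0) (hB : ∀ v w, B' v w = B (L v) (L w)) :
    sSup (negSet B') ≤ sSup (negSet B) := by
  obtain ⟨U, hU, hneg⟩ := sSup_negSet_mem B'
  apply le_csSup (negSet_bdd B)
  refine ⟨U.map L, ?_, ?_⟩
  · rw [← hU]
    apply (Submodule.finrank_map_le ..).antisymm
    have hinj : Function.Injective (L.domRestrict U) := by
      rw [← LinearMap.ker_eq_bot, LinearMap.ker_eq_bot']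
      rintro ⟨x, hx⟩ hLx
      have hLx' : L x = 0 := by simpa using hLx
      have : x = 0 := by
        by_contra h0
        have := hneg x hx h0
        rw [hB, hLx', hB0] at this
        exact absurd this (lt_irrefl 0)
      simp [this]
    have := LinearMap.finrank_range_of_inj hinj
    rw [LinearMap.range_domRestrict] at this
    rw [this]
  · rintro v hv hv0
    obtain ⟨x, hx, rfl⟩ := Submodule.mem_map.mp hv
    have hx0 : x ≠ 0 := fun h => hv0 (by simp [h])
    exact hB x x ▸ hneg x hx hx0

lemma index_le_comp (B : V → V → ℝ) (B' : W → W → ℝ) (L : W →ₗ[ℝ] V)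
    (hL : Function.Injective L) (hdim : finrank ℝ V ≤ finrank ℝ W + 1)
    (hB : ∀ v w, B' v w = B (L v) (L w)) :
    sSup (negSet B) ≤ sSup (negSet B') + 1 := by
  obtain ⟨U, hU, hneg⟩ := sSup_negSet_mem B
  rw [← hU]
  have h1 : finrank ℝ U ≤ finrank ℝ (U.comap L) + 1 := by
    have e := Submodule.equivMapOfInjective L hL (U.comap L)
    have hrk : finrank ℝ (U.comap L) = finrank ℝ ((U.comap L).map L) := e.finrank_eq
    rw [Submodule.map_comap_eq] at hrk
    have hsum := Submodule.finrank_sup_add_finrank_inf_eq (LinearMap.range L) U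
    have hle : finrank ℝ ((LinearMap.range L) ⊔ U : Submodule ℝ V) ≤ finrank ℝ V :=
      Submodule.finrank_le _
    have hrange : finrank ℝ (LinearMap.range L) = finrank ℝ W :=
      LinearMap.finrank_range_of_inj hL
    omega
  have h2 : finrank ℝ (U.comap L) ≤ sSup (negSet B') := by
    apply le_csSup (negSet_bdd B')
    refine ⟨U.comap L, rfl, fun v hv hv0 => ?_⟩
    rw [hB]
    exact hneg (L v) (Submodule.mem_comap.mp hv)
      fun h => hv0 (hL (h.trans (map_zero L).symm))
  omega

end LinAlg

/-- The Hessian bilinear form of `f : M → ℝ` at `p`, computed in the preferred chart. -/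
noncomputable def mHessian (m : ℕ) {M : Type*} [TopologicalSpace M]
    [ChartedSpace (EuclideanSpace ℝ (Fin m)) M] (f : M → ℝ) (p : M)
    (v w : EuclideanSpace ℝ (Fin m)) : ℝ :=
  iteratedFDeriv ℝ 2 (f ∘ (extChartAt (𝓡 m) p).symm) (extChartAt (𝓡 m) p p) ![v, w]

/-- Nondegeneracy of the Hessian of `f` at `p`. -/
def MNondegenerate (m : ℕ) {M : Type*} [TopologicalSpace M]
    [ChartedSpace (EuclideanSpace ℝ (Fin m)) M] (f : M → ℝ) (p : M) : Prop :=
  ∀ v : EuclideanSpace ℝ (Fin m), v ≠ 0 → ∃ w, mHessian m f p v w ≠ 0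

/-- The Morse index of `f` at `p`: the maximal dimension of a subspace on which the
Hessian is negative definite. -/
noncomputable def morseIndex (m : ℕ) {M : Type*} [TopologicalSpace M]
    [ChartedSpace (EuclideanSpace ℝ (Fin m)) M] (f : M → ℝ) (p : M) : ℕ :=
  sSup {k | ∃ U : Submodule ℝ (EuclideanSpace ℝ (Fin m)),
    Module.finrank ℝ U = k ∧ ∀ v ∈ U, v ≠ 0 → mHessian m f p v v < 0}

/-- If `p` is a nondegenerate critical point of both `f` and its restriction to an embedded
codimension-one submanifold (given by a smooth embedding `ι : N → M`), then the Morse index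
of `f` at `p` equals the Morse index of the restriction, or that index plus one. -/
theorem morse_index_restriction_codim_one
    (m : ℕ) (hm : 1 ≤ m)
    {M : Type*} [TopologicalSpace M] [ChartedSpace (EuclideanSpace ℝ (Fin m)) M]
    [IsManifold (𝓡 m) (⊤ : ℕ∞) M]
    {N : Type*} [TopologicalSpace N] [ChartedSpace (EuclideanSpace ℝ (Fin (m - 1))) N]
    [IsManifold (𝓡 (m - 1)) (⊤ : ℕ∞) N]
    (f : M → ℝ) (hf : ContMDiff (𝓡 m) 𝓘(ℝ, ℝ) (⊤ : ℕ∞) f)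
    (ι : N → M) (hι : ContMDiff (𝓡 (m - 1)) (𝓡 m) (⊤ : ℕ∞) ι)
    (hemb : Topology.IsEmbedding ι)
    (himm : ∀ q : N, Function.Injective (mfderiv (𝓡 (m - 1)) (𝓡 m) ι q))
    (q : N) (p : M) (hpq : ι q = p)
    (hcrit : mfderiv (𝓡 m) 𝓘(ℝ, ℝ) f p = 0)
    (hcritN : mfderiv (𝓡 (m - 1)) 𝓘(ℝ, ℝ) (f ∘ ι) q = 0)
    (hnd : MNondegenerate m f p) (hndN : MNondegenerate (m - 1) (f ∘ ι) q) :
    morseIndex m f p = morseIndex (m - 1) (f ∘ ι) q ∨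
    morseIndex m f p = morseIndex (m - 1) (f ∘ ι) q + 1 := by
  subst hpq
  set φ := extChartAt (𝓡 (m - 1)) q with hφ
  set ψ := extChartAt (𝓡 m) (ι q) with hψ
  set x₀ := φ q with hx₀
  set g : EuclideanSpace ℝ (Fin m) → ℝ := f ∘ ψ.symm with hg_def
  set hmap : EuclideanSpace ℝ (Fin (m - 1)) → EuclideanSpace ℝ (Fin m) :=
    ψ ∘ ι ∘ φ.symm with hmap_def
  have hmx : hmap x₀ = ψ (ι q) := by
    simp only [hmap_def, hx₀, Function.comp_apply, hφ]
    rw [extChartAt_to_inv]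
  -- smoothness in charts
  have hg : ContDiffAt ℝ 2 g (ψ (ι q)) := by
    have h2 := (contMDiffAt_iff.mp (hf (ι q))).2
    rw [(𝓡 m).range_eq_univ, contDiffWithinAt_univ] at h2
    simp only [extChartAt_model_space_eq_id, PartialEquiv.refl_coe, Function.id_comp] at h2
    exact h2.of_le (by norm_cast)
  have hh : ContDiffAt ℝ 2 hmap x₀ := by
    have h2 := (contMDiffAt_iff.mp (hι q)).2
    rw [(𝓡 (m - 1)).range_eq_univ, contDiffWithinAt_univ] at h2
    exact h2.of_le (by norm_cast)
  -- critical point in chart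
  have hg' : fderiv ℝ g (ψ (ι q)) = 0 := by
    have hd := (hf (ι q)).mdifferentiableAt (by simp)
    have hm' := hd.mfderiv
    rw [hcrit] at hm'
    simp only [writtenInExtChartAt, extChartAt_model_space_eq_id, PartialEquiv.refl_coe,
      Function.id_comp, (𝓡 m).range_eq_univ, fderivWithin_univ] at hm'
    exact hm'.symm
  -- mfderiv ι q is fderiv of hmap
  have hdι := (hι q).mdifferentiableAt (by simp)
  have hLeq : mfderiv (𝓡 (m - 1)) (𝓡 m) ι q = fderiv ℝ hmap x₀ := by
    rw [hdι.mfderiv]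
    simp only [writtenInExtChartAt, (𝓡 (m - 1)).range_eq_univ, fderivWithin_univ]
    rfl
  -- local identity: (f ∘ ι) in chart = g ∘ hmap near x₀
  have hsrc : ∀ᶠ x in 𝓝 x₀, ι (φ.symm x) ∈ ψ.source := by
    have hcont : ContinuousAt (fun x => ι (φ.symm x)) x₀ :=
      hemb.continuous.continuousAt.comp (continuousAt_extChartAt_symm q)
    have hfix : ι (φ.symm x₀) = ι q := by rw [hx₀, hφ, extChartAt_to_inv]
    have hmem : ψ.source ∈ 𝓝 (ι (φ.symm x₀)) := by
      rw [hfix]; exact extChartAt_source_mem_nhds (ι q)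
    exact hcont hmem
  have heq : (f ∘ ι) ∘ ⇑φ.symm =ᶠ[𝓝 x₀] g ∘ hmap := by
    filter_upwards [hsrc] with x hx
    simp only [Function.comp_apply, hg_def, hmap_def]
    rw [PartialEquiv.left_inv _ hx]
  -- the Hessian transformation rule
  have hkey : ∀ v w, mHessian (m - 1) (f ∘ ι) q v w
      = mHessian m f (ι q) (fderiv ℝ hmap x₀ v) (fderiv ℝ hmap x₀ w) := by
    intro v w
    unfold mHessian
    have h1 : iteratedFDeriv ℝ 2 ((f ∘ ι) ∘ ⇑φ.symm) x₀ = iteratedFDeriv ℝ 2 (g ∘ hmap) x₀ := by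
      rw [← iteratedFDerivWithin_univ, ← iteratedFDerivWithin_univ]
      exact Filter.EventuallyEq.iteratedFDerivWithin_eq
        (by rwa [nhdsWithin_univ]) heq.eq_of_nhds 2
    rw [show extChartAt (𝓡 (m - 1)) q = φ from rfl,
      show extChartAt (𝓡 m) (ι q) = ψ from rfl]
    rw [← hx₀, h1]
    rw [hessian_comp (hmx ▸ hg) hh (hmx ▸ hg') v w, hmx]
  -- assemble via linear algebra
  have hB0 : mHessian m f (ι q) 0 0 = 0 := by
    unfold mHessian
    exact ContinuousMultilinearMap.map_coord_zero _ 0 (by simp)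
  have hinj : Function.Injective ((fderiv ℝ hmap x₀).toLinearMap) := by
    have := himm q
    rw [hLeq] at this
    exact this
  have hdim : finrank ℝ (EuclideanSpace ℝ (Fin m))
      ≤ finrank ℝ (EuclideanSpace ℝ (Fin (m - 1))) + 1 := by
    rw [finrank_euclideanSpace_fin, finrank_euclideanSpace_fin]
    omega
  have e1 : morseIndex m f (ι q) = sSup (negSet (mHessian m f (ι q))) := rfl
  have e2 : morseIndex (m - 1) (f ∘ ι) q = sSup (negSet (mHessian (m - 1) (f ∘ ι) q)) := rfl
  have le1 := index_comp_le (mHessian m f (ι q)) (mHessian (m - 1) (f ∘ ι) q)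
    ((fderiv ℝ hmap x₀).toLinearMap) hB0 (by simpa using hkey)
  have le2 := index_le_comp (mHessian m f (ι q)) (mHessian (m - 1) (f ∘ ι) q)
    ((fderiv ℝ hmap x₀).toLinearMap) hinj hdim (by simpa using hkey)
  rw [e1, e2]
  omega
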